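/- Let X be a real Banach space with a Schauder basis (e_i, e_i^*) and let 𝒜 = ℝI⊕𝒦_diag(X). For T ∈ 𝒜 and i ∈ ℕ set λ_{T,i} := e_i^*(T e_i), and set λ_{T,∞} := lim_{i→∞} λ_{T,i} (this limit exists for every T ∈ 𝒜). For a subset L of ℕ ∪ {∞}, define 𝒜_L := { T ∈ 𝒜 : λ_{T,κ} = 0 for all κ ∈ L }. Then a subset ℐ of 𝒜 is a norm-closed linear subspace satisfying T∘S ∈ ℐ for every T ∈ 𝒜 and S ∈ ℐ (i.e., a closed ideal of 𝒜) if and only if ℐ = 𝒜_L for some subset L of ℕ ∪ {∞} that is closed in the one-point compactification topology (i.e., if L is infinite then ∞ ∈ L). -/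

import Mathlib

open scoped BigOperators

/-- A Schauder basis of a real normed space. -/
structure RealSchauderBasis (X : Type*) [NormedAddCommGroup X] [NormedSpace ℝ X] where
  e : ℕ → X
  f : ℕ → X →L[ℝ] ℝ
  biorth : ∀ i j, f i (e j) = if i = j then 1 else 0
  expansion : ∀ x : X,
    Filter.Tendsto (fun n => ∑ i ∈ Finset.range n, f i x • e i) Filter.atTop (nhds x)

variable {X : Type*} [NormedAddCommGroup X] [NormedSpace ℝ X]

/-- A diagonal operator with respect to a Schauder basis. -/
def IsDiagonal (b : RealSchauderBasis X) (T : X →L[ℝ] X) : Prop :=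
  ∀ i j, i ≠ j → b.f j (T (b.e i)) = 0

/-- The subalgebra `𝒜 = ℝI ⊕ 𝒦_diag(X)` of all operators of the form `λ • Id + K` with `K`
compact and diagonal. -/
def scalarPlusDiagCompact (b : RealSchauderBasis X) : Set (X →L[ℝ] X) :=
  {T | ∃ (c : ℝ) (K : X →L[ℝ] X), IsCompactOperator ⇑K ∧ IsDiagonal b K ∧
    T = c • (1 : X →L[ℝ] X) + K}

/-- The diagonal entries of an operator, extended with the value at `∞` (encoded as `none`),
namely `λ_{T,i} = e_i^*(T e_i)` and `λ_{T,∞} = lim_i λ_{T,i}`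
(the limit exists whenever `T ∈ ℝI ⊕ 𝒦_diag(X)`). -/
noncomputable def diagEntry (b : RealSchauderBasis X) (T : X →L[ℝ] X) : Option ℕ → ℝ
  | some i => b.f i (T (b.e i))
  | none => Filter.limUnder Filter.atTop (fun i => b.f i (T (b.e i)))

open Filter

namespace RealSchauderBasis

variable (b : RealSchauderBasis X)

lemma biorth_self (i : ℕ) : b.f i (b.e i) = 1 := by simp [b.biorth]

lemma biorth_ne {i j : ℕ} (h : i ≠ j) : b.f i (b.e j) = 0 := by simp [b.biorth, h]

lemma e_ne_zero (i : ℕ) : b.e i ≠ 0 := by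
  intro h
  have := b.biorth_self i
  rw [h, map_zero] at this
  norm_num at this

lemma e_norm_pos (i : ℕ) : 0 < ‖b.e i‖ := norm_pos_iff.2 (b.e_ne_zero i)

/-- The rank-one coordinate projections. -/
noncomputable def P (i : ℕ) : X →L[ℝ] X := (b.f i).smulRight (b.e i)

@[simp] lemma P_apply (i : ℕ) (x : X) : b.P i x = b.f i x • b.e i := rfl

/-- The partial-sum projections. -/
noncomputable def Q (n : ℕ) : X →L[ℝ] X := ∑ i ∈ Finset.range n, b.P i

lemma Q_apply (n : ℕ) (x : X) : b.Q n x = ∑ i ∈ Finset.range n, b.f i x • b.e i := by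
  simp [Q]

lemma tendsto_Q (x : X) : Tendsto (fun n => b.Q n x) atTop (nhds x) := by
  simpa [Q_apply] using b.expansion x

lemma Q_apply_e (n j : ℕ) : b.Q n (b.e j) = if j < n then b.e j else 0 := by
  rw [Q_apply]
  by_cases h : j < n
  · rw [if_pos h, Finset.sum_eq_single j]
    · simp [b.biorth_self]
    · intro i hi hij; simp [b.biorth_ne hij]
    · intro h'; exact absurd (Finset.mem_range.2 h) h'
  · rw [if_neg h, Finset.sum_eq_zero]
    intro i hi
    have : i ≠ j := by rintro rfl; exact h (Finset.mem_range.1 hi)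
    simp [b.biorth_ne this]

/-- Eventually-constant coordinates: a vector all whose coordinates vanish is zero. -/
lemma eq_zero_of_coords (x : X) (h : ∀ i, b.f i x = 0) : x = 0 := by
  have h1 : Tendsto (fun n => b.Q n x) atTop (nhds x) := b.tendsto_Q x
  have h2 : (fun n => b.Q n x) = fun _ => (0 : X) := by
    funext n; rw [Q_apply, Finset.sum_eq_zero]; intro i _; simp [h i]
  rw [h2] at h1
  exact (tendsto_nhds_unique tendsto_const_nhds h1).symm

/-- Density of the span of the basis vectors gives an extensionality principle. -/
lemma ext_e {T S : X →L[ℝ] X} (h : ∀ j, T (b.e j) = S (b.e j)) : T = S := by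
  have hd : Dense (Submodule.span ℝ (Set.range b.e) : Set X) := by
    rw [dense_iff_closure_eq, Set.eq_univ_iff_forall]
    intro x
    refine mem_closure_of_tendsto (b.expansion x) (Filter.Eventually.of_forall fun n => ?_)
    exact Submodule.sum_mem _ fun i _ =>
      Submodule.smul_mem _ _ (Submodule.subset_span ⟨i, rfl⟩)
  refine ContinuousLinearMap.ext_on hd ?_
  rintro x ⟨j, rfl⟩
  exact h j

/-- A diagonal operator acts diagonally on the basis. -/
lemma diag_apply_e {K : X →L[ℝ] X} (hK : IsDiagonal b K) (i : ℕ) :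
    K (b.e i) = b.f i (K (b.e i)) • b.e i := by
  have h1 := b.expansion (K (b.e i))
  have h2 : ∀ n, i < n → (∑ j ∈ Finset.range n, b.f j (K (b.e i)) • b.e j)
      = b.f i (K (b.e i)) • b.e i := by
    intro n hn
    rw [Finset.sum_eq_single i]
    · intro j hj hji; rw [hK i j (Ne.symm hji)]; simp
    · intro h; exact absurd (Finset.mem_range.2 hn) h
  have h3 : Tendsto (fun _ : ℕ => b.f i (K (b.e i)) • b.e i) atTop (nhds (K (b.e i))) := by
    refine h1.congr' ?_
    filter_upwards [eventually_gt_atTop i] with n hn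
    exact h2 n hn
  exact (tendsto_nhds_unique tendsto_const_nhds h3).symm

end RealSchauderBasis
namespace RealSchauderBasis

section Complete

variable {X : Type*} [NormedAddCommGroup X] [NormedSpace ℝ X] [CompleteSpace X]
variable (b : RealSchauderBasis X)

lemma exists_bound : ∃ C : ℝ, 1 ≤ C ∧ ∀ n, ‖b.Q n‖ ≤ C := by
  have h : ∀ x : X, ∃ C', ∀ n, ‖b.Q n x‖ ≤ C' := by
    intro x
    obtain ⟨C', hC'⟩ := (b.tendsto_Q x).norm.bddAbove_range
    exact ⟨C', fun n => hC' ⟨n, rfl⟩⟩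
  obtain ⟨C', hC'⟩ := banach_steinhaus h
  exact ⟨max C' 1, le_max_right _ _, fun n => (hC' n).trans (le_max_left _ _)⟩

/-- A fixed constant dominating the basis projections. -/
noncomputable def bC : ℝ := (b.exists_bound).choose

lemma one_le_bC : 1 ≤ b.bC := (b.exists_bound).choose_spec.1

lemma norm_Q_le (n : ℕ) : ‖b.Q n‖ ≤ b.bC := (b.exists_bound).choose_spec.2 n

lemma coord_bound (i : ℕ) (y : X) : |b.f i y| * ‖b.e i‖ ≤ 2 * b.bC * ‖y‖ := by
  have hP : b.P i y = b.Q (i + 1) y - b.Q i y := by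
    simp [Q, Finset.sum_range_succ]
  have : |b.f i y| * ‖b.e i‖ = ‖b.P i y‖ := by
    rw [P_apply, norm_smul, Real.norm_eq_abs]
  rw [this, hP]
  calc ‖b.Q (i + 1) y - b.Q i y‖ ≤ ‖b.Q (i + 1) y‖ + ‖b.Q i y‖ := norm_sub_le _ _
    _ ≤ ‖b.Q (i + 1)‖ * ‖y‖ + ‖b.Q i‖ * ‖y‖ := by
        gcongr <;> exact (b.Q _).le_opNorm y
    _ ≤ b.bC * ‖y‖ + b.bC * ‖y‖ := by
        gcongr <;> first | exact b.norm_Q_le _ | exact norm_nonneg _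
    _ = 2 * b.bC * ‖y‖ := by ring

lemma diag_coeff_bound (S : X →L[ℝ] X) (i : ℕ) :
    |b.f i (S (b.e i))| ≤ 2 * b.bC * ‖S‖ := by
  have h := b.coord_bound i (S (b.e i))
  have h2 : ‖S (b.e i)‖ ≤ ‖S‖ * ‖b.e i‖ := S.le_opNorm _
  have hpos := b.e_norm_pos i
  nlinarith [abs_nonneg (b.f i (S (b.e i))), norm_nonneg S, b.one_le_bC]

/-- The eigenvalues of a compact diagonal operator tend to zero. -/
lemma tendsto_eigen_zero {K : X →L[ℝ] X} (hc : IsCompactOperator ⇑K)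
    (hd : IsDiagonal b K) :
    Tendsto (fun i => b.f i (K (b.e i))) atTop (nhds 0) := by
  set lam : ℕ → ℝ := fun i => b.f i (K (b.e i)) with hlam
  by_contra hcon
  rw [Metric.tendsto_atTop] at hcon
  push_neg at hcon
  obtain ⟨ε, hε, hfreq⟩ := hcon
  -- build a strictly monotone sequence along which |lam| ≥ ε
  have hfreq' : ∀ N, ∃ n ≥ N, ε ≤ |lam n| := by
    intro N
    obtain ⟨n, hn, h⟩ := hfreq N
    exact ⟨n, hn, by simpa [Real.dist_eq] using h⟩
  obtain ⟨φ, hφmono, hφ⟩ := Filter.extraction_of_frequently_atTop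
    (Filter.frequently_atTop.2 hfreq')
  -- the normalized basis vectors
  set x : ℕ → X := fun n => ‖b.e (φ n)‖⁻¹ • b.e (φ n) with hx
  have hxnorm : ∀ n, ‖x n‖ = 1 := by
    intro n
    rw [hx]
    simp [norm_smul, abs_inv, abs_of_pos (b.e_norm_pos (φ n)),
      inv_mul_cancel₀ (b.e_norm_pos (φ n)).ne']
  obtain ⟨M, hM, hMsub⟩ := hc.image_closedBall_subset_compact 1
  have hmem : ∀ n, K (x n) ∈ M := fun n =>
    hMsub ⟨x n, by simp [Metric.mem_closedBall, (hxnorm n).le], rfl⟩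
  obtain ⟨y, _, ψ, hψmono, hψtend⟩ := hM.tendsto_subseq hmem
  -- each coordinate of y is zero
  have hcoordy : ∀ j, b.f j y = 0 := by
    intro j
    have h1 : Tendsto (fun n => b.f j (K (x (ψ n)))) atTop (nhds (b.f j y)) :=
      ((b.f j).continuous.tendsto y).comp hψtend
    have h2 : ∀ᶠ n in atTop, b.f j (K (x (ψ n))) = 0 := by
      filter_upwards [eventually_gt_atTop j] with n hn
      have hne : φ (ψ n) ≠ j := by
        have : n ≤ ψ n := hψmono.le_apply
        have : n ≤ φ (ψ n) := le_trans this hφmono.le_apply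
        omega
      have : K (x (ψ n)) = ‖b.e (φ (ψ n))‖⁻¹ • K (b.e (φ (ψ n))) := by
        rw [hx]; simp
      rw [this, map_smul]
      rw [b.diag_apply_e hd (φ (ψ n)), map_smul, b.biorth_ne (Ne.symm hne)]
      simp
    have h3 : Tendsto (fun _ : ℕ => (0 : ℝ)) atTop (nhds (b.f j y)) := h1.congr' h2
    exact tendsto_nhds_unique h3 tendsto_const_nhds
  have hy0 : y = 0 := b.eq_zero_of_coords y hcoordy
  -- but the norms stay bounded below
  have hnorm : Tendsto (fun n => ‖K (x (ψ n))‖) atTop (nhds ‖y‖) :=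
    (continuous_norm.tendsto y).comp hψtend
  have hlow : ∀ n, ε ≤ ‖K (x (ψ n))‖ := by
    intro n
    have : K (x (ψ n)) = lam (φ (ψ n)) • x (ψ n) := by
      rw [hx]; simp only [map_smul]
      rw [b.diag_apply_e hd (φ (ψ n))]
      rw [smul_comm]
    rw [this, norm_smul, hxnorm, mul_one, Real.norm_eq_abs]
    exact hφ (ψ n)
  have : ε ≤ ‖y‖ := le_of_tendsto_of_tendsto tendsto_const_nhds hnorm
    (Filter.Eventually.of_forall hlow)
  rw [hy0, norm_zero] at this
  linarith

end Complete

end RealSchauderBasis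
namespace RealSchauderBasis

section Algebra

variable {X : Type*} [NormedAddCommGroup X] [NormedSpace ℝ X] [CompleteSpace X]
variable (b : RealSchauderBasis X)

/-- Scalar part of a decomposition is the limit of the diagonal entries. -/
lemma tendsto_diag_of_decomp {T K : X →L[ℝ] X} {c : ℝ} (hc : IsCompactOperator ⇑K)
    (hd : IsDiagonal b K) (hT : T = c • (1 : X →L[ℝ] X) + K) :
    Tendsto (fun i => b.f i (T (b.e i))) atTop (nhds c) := by
  have h : ∀ i, b.f i (T (b.e i)) = c + b.f i (K (b.e i)) := by
    intro i
    rw [hT]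
    simp [b.biorth_self i]
  simp only [h]
  simpa using tendsto_const_nhds.add (b.tendsto_eigen_zero hc hd)

lemma diagEntry_none_of_decomp {T K : X →L[ℝ] X} {c : ℝ} (hc : IsCompactOperator ⇑K)
    (hd : IsDiagonal b K) (hT : T = c • (1 : X →L[ℝ] X) + K) :
    diagEntry b T none = c :=
  (b.tendsto_diag_of_decomp hc hd hT).limUnder_eq

lemma tendsto_diagEntry {T : X →L[ℝ] X} (hT : T ∈ scalarPlusDiagCompact b) :
    Tendsto (fun i => diagEntry b T (some i)) atTop (nhds (diagEntry b T none)) := by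
  obtain ⟨c, K, hc, hd, rfl⟩ := hT
  rw [b.diagEntry_none_of_decomp hc hd rfl]
  exact b.tendsto_diag_of_decomp hc hd rfl

/-- Members of the algebra act diagonally on the basis. -/
lemma memA_apply_e {T : X →L[ℝ] X} (hT : T ∈ scalarPlusDiagCompact b) (i : ℕ) :
    T (b.e i) = diagEntry b T (some i) • b.e i := by
  obtain ⟨c, K, hc, hd, rfl⟩ := hT
  have hK := b.diag_apply_e hd i
  show (c • (1 : X →L[ℝ] X) + K) (b.e i) =
    b.f i ((c • (1 : X →L[ℝ] X) + K) (b.e i)) • b.e i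
  simp only [ContinuousLinearMap.add_apply, ContinuousLinearMap.smul_apply,
    ContinuousLinearMap.one_apply, map_add, map_smul, b.biorth_self i]
  rw [hK]
  simp only [map_smul, b.biorth_self i]
  simp only [smul_eq_mul, mul_one]
  rw [add_smul]

/-- The residual compact part of a member of the algebra. -/
lemma resid {T : X →L[ℝ] X} (hT : T ∈ scalarPlusDiagCompact b) :
    IsCompactOperator ⇑(T - diagEntry b T none • (1 : X →L[ℝ] X)) ∧
      IsDiagonal b (T - diagEntry b T none • (1 : X →L[ℝ] X)) ∧
      T = diagEntry b T none • (1 : X →L[ℝ] X) +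
        (T - diagEntry b T none • (1 : X →L[ℝ] X)) := by
  obtain ⟨c, K, hc, hd, rfl⟩ := hT
  rw [b.diagEntry_none_of_decomp hc hd rfl]
  have hKe : c • (1 : X →L[ℝ] X) + K - c • (1 : X →L[ℝ] X) = K := by abel
  rw [hKe]
  exact ⟨hc, hd, rfl⟩

lemma zero_memA : (0 : X →L[ℝ] X) ∈ scalarPlusDiagCompact b :=
  ⟨0, 0, by simpa using (isCompactOperator_zero : IsCompactOperator (0 : X → X)),
    fun i j _ => by simp, by simp⟩

lemma one_memA : (1 : X →L[ℝ] X) ∈ scalarPlusDiagCompact b :=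
  ⟨1, 0, by simpa using (isCompactOperator_zero : IsCompactOperator (0 : X → X)),
    fun i j _ => by simp, by simp⟩

lemma add_memA {T S : X →L[ℝ] X} (hT : T ∈ scalarPlusDiagCompact b)
    (hS : S ∈ scalarPlusDiagCompact b) : T + S ∈ scalarPlusDiagCompact b := by
  obtain ⟨c1, K1, hc1, hd1, rfl⟩ := hT
  obtain ⟨c2, K2, hc2, hd2, rfl⟩ := hS
  refine ⟨c1 + c2, K1 + K2, ?_, ?_, ?_⟩
  · simpa using hc1.add hc2
  · intro i j hij
    simp [hd1 i j hij, hd2 i j hij]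
  · rw [add_smul]; abel

lemma smul_memA (a : ℝ) {T : X →L[ℝ] X} (hT : T ∈ scalarPlusDiagCompact b) :
    a • T ∈ scalarPlusDiagCompact b := by
  obtain ⟨c, K, hc, hd, rfl⟩ := hT
  refine ⟨a * c, a • K, ?_, ?_, ?_⟩
  · simpa using hc.smul a
  · intro i j hij
    simp [hd i j hij]
  · rw [smul_add, smul_smul]

set_option maxHeartbeats 800000 in
set_option synthInstance.maxHeartbeats 200000 in
lemma mul_memA {T S : X →L[ℝ] X} (hT : T ∈ scalarPlusDiagCompact b)
    (hS : S ∈ scalarPlusDiagCompact b) : T * S ∈ scalarPlusDiagCompact b := by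
  obtain ⟨c1, K1, hc1, hd1, rfl⟩ := hT
  obtain ⟨c2, K2, hc2, hd2, rfl⟩ := hS
  refine ⟨c1 * c2, c1 • K2 + c2 • K1 + K1 * K2, ?_, ?_, ?_⟩
  · have h1 : IsCompactOperator ⇑(c1 • K2) := by simpa using hc2.smul c1
    have h2 : IsCompactOperator ⇑(c2 • K1) := by simpa using hc1.smul c2
    have h3 : IsCompactOperator ⇑(K1 * K2) := by
      have := hc1.comp_clm K2
      simpa [Function.comp] using this
    simpa using (h1.add h2).add h3
  · intro i j hij
    have hK2 := b.diag_apply_e hd2 i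
    simp only [ContinuousLinearMap.add_apply, ContinuousLinearMap.smul_apply, map_add, map_smul,
      ContinuousLinearMap.mul_apply]
    rw [hd1 i j hij, hd2 i j hij, hK2, map_smul, map_smul, hd1 i j hij]
    simp
  · ext x
    simp only [ContinuousLinearMap.add_apply, ContinuousLinearMap.smul_apply,
      ContinuousLinearMap.one_apply, ContinuousLinearMap.mul_apply, map_add, map_smul, smul_smul]
    module

lemma diagEntry_add {T S : X →L[ℝ] X} (hT : T ∈ scalarPlusDiagCompact b)
    (hS : S ∈ scalarPlusDiagCompact b) (κ : Option ℕ) :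
    diagEntry b (T + S) κ = diagEntry b T κ + diagEntry b S κ := by
  cases κ with
  | some i => simp [diagEntry]
  | none =>
    have h : Tendsto (fun i => diagEntry b (T + S) (some i)) atTop
        (nhds (diagEntry b T none + diagEntry b S none)) := by
      have := (b.tendsto_diagEntry hT).add (b.tendsto_diagEntry hS)
      refine this.congr fun i => ?_
      simp [diagEntry]
    exact h.limUnder_eq

lemma diagEntry_smul (a : ℝ) {T : X →L[ℝ] X} (hT : T ∈ scalarPlusDiagCompact b) (κ : Option ℕ) :
    diagEntry b (a • T) κ = a * diagEntry b T κ := by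
  cases κ with
  | some i => simp [diagEntry]
  | none =>
    have h : Tendsto (fun i => diagEntry b (a • T) (some i)) atTop
        (nhds (a * diagEntry b T none)) := by
      have := (b.tendsto_diagEntry hT).const_mul a
      refine this.congr fun i => ?_
      simp [diagEntry]
    exact h.limUnder_eq

lemma diagEntry_mul {T S : X →L[ℝ] X} (hT : T ∈ scalarPlusDiagCompact b)
    (hS : S ∈ scalarPlusDiagCompact b) (κ : Option ℕ) :
    diagEntry b (T * S) κ = diagEntry b T κ * diagEntry b S κ := by
  have hsome : ∀ i, diagEntry b (T * S) (some i) =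
      diagEntry b T (some i) * diagEntry b S (some i) := by
    intro i
    show b.f i ((T * S) (b.e i)) = _
    rw [ContinuousLinearMap.mul_apply, b.memA_apply_e hS i, map_smul, b.memA_apply_e hT i]
    simp [map_smul, b.biorth_self i, diagEntry, mul_comm]
  cases κ with
  | some i => exact hsome i
  | none =>
    have h : Tendsto (fun i => diagEntry b (T * S) (some i)) atTop
        (nhds (diagEntry b T none * diagEntry b S none)) := by
      have := (b.tendsto_diagEntry hT).mul (b.tendsto_diagEntry hS)
      exact this.congr fun i => (hsome i).symm
    exact h.limUnder_eq

lemma diagEntry_zero (κ : Option ℕ) : diagEntry b (0 : X →L[ℝ] X) κ = 0 := by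
  cases κ with
  | some i => simp [diagEntry]
  | none =>
    have h : Tendsto (fun i => diagEntry b (0 : X →L[ℝ] X) (some i)) atTop (nhds 0) := by
      simpa [diagEntry] using (tendsto_const_nhds : Tendsto (fun _ : ℕ => (0:ℝ)) atTop (nhds 0))
    exact h.limUnder_eq

lemma diagEntry_one (κ : Option ℕ) : diagEntry b (1 : X →L[ℝ] X) κ = 1 := by
  cases κ with
  | some i => simp [diagEntry, b.biorth_self i]
  | none =>
    have h : Tendsto (fun i => diagEntry b (1 : X →L[ℝ] X) (some i)) atTop (nhds 1) := by
      simpa [diagEntry, b.biorth_self] using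
        (tendsto_const_nhds : Tendsto (fun _ : ℕ => (1:ℝ)) atTop (nhds 1))
    exact h.limUnder_eq

end Algebra

end RealSchauderBasis
namespace RealSchauderBasis

section Ideal

variable {X : Type*} [NormedAddCommGroup X] [NormedSpace ℝ X] [CompleteSpace X]
variable (b : RealSchauderBasis X)

omit [CompleteSpace X] in
lemma opNorm_le_of_unit {g : X →L[ℝ] X} {δ : ℝ} (hδ : 0 ≤ δ)
    (h : ∀ u : X, ‖u‖ ≤ 1 → ‖g u‖ ≤ δ) : ‖g‖ ≤ δ := by
  refine g.opNorm_le_bound hδ fun x => ?_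
  rcases eq_or_ne x 0 with rfl | hx
  · simp
  · have hxpos : 0 < ‖x‖ := norm_pos_iff.2 hx
    have hu : ‖‖x‖⁻¹ • x‖ ≤ 1 := by
      rw [norm_smul, Real.norm_eq_abs, abs_of_pos (inv_pos.2 hxpos),
        inv_mul_cancel₀ hxpos.ne']
    have h2 := h _ hu
    have hgx : g x = ‖x‖ • g (‖x‖⁻¹ • x) := by
      rw [← map_smul, smul_smul, mul_inv_cancel₀ hxpos.ne', one_smul]
    rw [hgx, norm_smul, Real.norm_eq_abs, abs_of_pos hxpos, mul_comm δ ‖x‖]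
    exact mul_le_mul_of_nonneg_left h2 hxpos.le

omit [CompleteSpace X] in
/-- The coordinate projections belong to the algebra. -/
lemma P_memA (i : ℕ) : b.P i ∈ scalarPlusDiagCompact b := by
  refine ⟨0, b.P i, ?_, ?_, by simp⟩
  · refine ⟨(fun t : ℝ => t • b.e i) '' Metric.closedBall 0 (‖b.f i‖ + 1), ?_, ?_⟩
    · exact (isCompact_closedBall 0 _).image (continuous_id.smul continuous_const)
    · refine Filter.mem_of_superset (Metric.ball_mem_nhds 0 one_pos) ?_
      intro x hx
      refine ⟨b.f i x, ?_, rfl⟩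
      rw [Metric.mem_closedBall, Real.dist_eq, sub_zero]
      have h1 : |b.f i x| ≤ ‖b.f i‖ * ‖x‖ := (b.f i).le_opNorm x
      have h2 : ‖x‖ < 1 := by simpa [Metric.mem_ball, dist_zero_right] using hx
      nlinarith [norm_nonneg (b.f i), abs_nonneg (b.f i x)]
  · intro k j hkj
    rcases eq_or_ne i k with rfl | hik
    · simp [b.biorth_ne (Ne.symm hkj)]
    · simp only [P_apply, map_smul, smul_eq_mul]
      rw [b.biorth_ne hik]
      simp

/-- `P i * T = λ_{T,i} • P i` for members of the algebra. -/
lemma P_mul {T : X →L[ℝ] X} (hT : T ∈ scalarPlusDiagCompact b) (i : ℕ) :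
    b.P i * T = diagEntry b T (some i) • b.P i := by
  refine b.ext_e fun j => ?_
  rw [ContinuousLinearMap.mul_apply, b.memA_apply_e hT j]
  rcases eq_or_ne i j with rfl | hij
  · simp [b.biorth_self i]
  · simp [b.biorth_ne hij]

/-- `T ∘ Q n` is the finite sum of weighted coordinate projections. -/
lemma mul_Q {T : X →L[ℝ] X} (hT : T ∈ scalarPlusDiagCompact b) (n : ℕ) :
    T * b.Q n = ∑ i ∈ Finset.range n, diagEntry b T (some i) • b.P i := by
  refine b.ext_e fun j => ?_
  rw [ContinuousLinearMap.mul_apply, b.Q_apply_e n j]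
  rw [ContinuousLinearMap.sum_apply]
  by_cases h : j < n
  · rw [if_pos h, b.memA_apply_e hT j, Finset.sum_eq_single j]
    · simp [b.biorth_self j]
    · intro i hi hij
      simp [b.biorth_ne hij]
    · intro hj; exact absurd (Finset.mem_range.2 h) hj
  · rw [if_neg h, map_zero, Finset.sum_eq_zero]
    intro i hi
    have hij : i ≠ j := by rintro rfl; exact h (Finset.mem_range.1 hi)
    simp [b.biorth_ne hij]

/-- `Q n` commutes with members of the algebra. -/
lemma Q_mul {T : X →L[ℝ] X} (hT : T ∈ scalarPlusDiagCompact b) (n : ℕ) :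
    b.Q n * T = T * b.Q n := by
  refine b.ext_e fun j => ?_
  rw [ContinuousLinearMap.mul_apply, ContinuousLinearMap.mul_apply, b.memA_apply_e hT j,
    map_smul, b.Q_apply_e n j]
  by_cases h : j < n
  · rw [if_pos h, b.memA_apply_e hT j]
  · rw [if_neg h, smul_zero, map_zero]

/-- Norm-approximation of a compact operator by `Q n ∘ K`. -/
lemma tendsto_Q_mul_compact {K : X →L[ℝ] X} (hc : IsCompactOperator ⇑K) :
    Tendsto (fun n => b.Q n * K) atTop (nhds K) := by
  rw [Metric.tendsto_atTop]
  intro ε hε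
  obtain ⟨M, hM, hMsub⟩ := hc.image_closedBall_subset_compact 1
  set C := b.bC with hC
  have hC1 : (1 : ℝ) ≤ C := b.one_le_bC
  set ε' : ℝ := ε / (4 * C) with hε'
  have hε'pos : 0 < ε' := by positivity
  obtain ⟨t, htfin, htsub⟩ := (Metric.totallyBounded_iff.1 hM.totallyBounded) ε' hε'pos
  have hN : ∀ y : X, ∃ N, ∀ n ≥ N, ‖b.Q n y - y‖ < ε' := by
    intro y
    have := (Metric.tendsto_atTop.1 (b.tendsto_Q y)) ε' hε'pos
    obtain ⟨N, hNy⟩ := this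
    exact ⟨N, fun n hn => by simpa [dist_eq_norm] using hNy n hn⟩
  choose Nf hNf using hN
  refine ⟨htfin.toFinset.sup Nf, fun n hn => ?_⟩
  rw [dist_eq_norm]
  have key : ∀ u : X, ‖u‖ ≤ 1 → ‖(b.Q n * K - K) u‖ ≤ 3 * C * ε' := by
    intro u hu
    have hKu : K u ∈ M := hMsub ⟨u, by simpa [Metric.mem_closedBall] using hu, rfl⟩
    obtain ⟨y, hyt, hy⟩ := Set.mem_iUnion₂.1 (htsub hKu)
    have hyd : ‖K u - y‖ < ε' := by simpa [Metric.mem_ball, dist_eq_norm] using hy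
    have hny : Nf y ≤ n := le_trans (Finset.le_sup (htfin.mem_toFinset.2 hyt)) hn
    have h1 : ‖b.Q n (K u) - K u‖ ≤
        ‖b.Q n (K u - y)‖ + ‖b.Q n y - y‖ + ‖y - K u‖ := by
      have : b.Q n (K u) - K u = b.Q n (K u - y) + (b.Q n y - y) + (y - K u) := by
        rw [map_sub]; abel
      rw [this]
      exact le_trans (norm_add_le _ _) (by gcongr; exact norm_add_le _ _)
    have h2 : ‖b.Q n (K u - y)‖ ≤ C * ε' := by
      calc ‖b.Q n (K u - y)‖ ≤ ‖b.Q n‖ * ‖K u - y‖ := (b.Q n).le_opNorm _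
        _ ≤ C * ε' := by
            apply mul_le_mul (b.norm_Q_le n) hyd.le (norm_nonneg _) (le_trans zero_le_one hC1)
    have h3 : ‖b.Q n y - y‖ < ε' := hNf y n hny
    have h4 : ‖y - K u‖ < ε' := by rwa [norm_sub_rev]
    have : ‖(b.Q n * K - K) u‖ = ‖b.Q n (K u) - K u‖ := rfl
    rw [this]
    nlinarith
  have hnorm : ‖b.Q n * K - K‖ ≤ 3 * C * ε' := opNorm_le_of_unit (by positivity) key
  have : 3 * C * ε' < ε := by
    rw [hε']
    rw [div_eq_mul_inv]
    have h4C : (0:ℝ) < 4 * C := by linarith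
    calc 3 * C * (ε * (4 * C)⁻¹) = (3 * C) / (4 * C) * ε := by ring
      _ < 1 * ε := by
          apply mul_lt_mul_of_pos_right _ hε
          rw [div_lt_one h4C]; linarith
      _ = ε := one_mul ε
  linarith

end Ideal

end RealSchauderBasis
namespace RealSchauderBasis

section Closed

variable {X : Type*} [NormedAddCommGroup X] [NormedSpace ℝ X] [CompleteSpace X]
variable (b : RealSchauderBasis X)

lemma sub_memA {T S : X →L[ℝ] X} (hT : T ∈ scalarPlusDiagCompact b)
    (hS : S ∈ scalarPlusDiagCompact b) : T - S ∈ scalarPlusDiagCompact b := by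
  have : T - S = T + (-1 : ℝ) • S := by simp [sub_eq_add_neg]
  rw [this]
  exact b.add_memA hT (b.smul_memA (-1) hS)

lemma diagEntry_sub {T S : X →L[ℝ] X} (hT : T ∈ scalarPlusDiagCompact b)
    (hS : S ∈ scalarPlusDiagCompact b) (κ : Option ℕ) :
    diagEntry b (T - S) κ = diagEntry b T κ - diagEntry b S κ := by
  have h : T - S = T + (-1 : ℝ) • S := by simp [sub_eq_add_neg]
  rw [h, b.diagEntry_add hT (b.smul_memA (-1) hS), b.diagEntry_smul (-1) hS]
  ring

lemma diag_none_bound {T : X →L[ℝ] X} (hT : T ∈ scalarPlusDiagCompact b) :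
    |diagEntry b T none| ≤ 2 * b.bC * ‖T‖ := by
  have h1 : Tendsto (fun i => |diagEntry b T (some i)|) atTop (nhds |diagEntry b T none|) :=
    (b.tendsto_diagEntry hT).abs
  refine le_of_tendsto h1 (Filter.Eventually.of_forall fun i => ?_)
  exact b.diag_coeff_bound T i

/-- The candidate ideals are closed. -/
lemma isClosed_AL (L : Set (Option ℕ)) :
    IsClosed {T : X →L[ℝ] X | T ∈ scalarPlusDiagCompact b ∧
      ∀ κ ∈ L, diagEntry b T κ = 0} := by
  refine IsSeqClosed.isClosed ?_
  intro g T hg htend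
  set c : ℕ → ℝ := fun n => diagEntry b (g n) none with hcdef
  have hgA : ∀ n, g n ∈ scalarPlusDiagCompact b := fun n => (hg n).1
  -- the scalar parts form a Cauchy sequence
  have hgc : CauchySeq g := htend.cauchySeq
  have hcau : CauchySeq c := by
    rw [Metric.cauchySeq_iff]
    intro ε hε
    have hC1 : (1:ℝ) ≤ b.bC := b.one_le_bC
    have hpos : 0 < ε / (2 * b.bC + 1) := by positivity
    obtain ⟨N, hN⟩ := Metric.cauchySeq_iff.1 hgc _ hpos
    refine ⟨N, fun m hm n hn => ?_⟩
    have hsub := b.sub_memA (hgA m) (hgA n)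
    have hb := b.diag_none_bound hsub
    rw [b.diagEntry_sub (hgA m) (hgA n)] at hb
    have hd : dist (g m) (g n) < ε / (2 * b.bC + 1) := hN m hm n hn
    rw [dist_eq_norm] at hd
    rw [Real.dist_eq]
    calc |c m - c n| ≤ 2 * b.bC * ‖g m - g n‖ := hb
      _ < 2 * b.bC * (ε / (2 * b.bC + 1)) := by
          apply mul_lt_mul_of_pos_left hd; positivity
      _ ≤ ε := by
          rw [mul_div_assoc']
          rw [div_le_iff₀ (by positivity)]
          nlinarith
  obtain ⟨clim, hclim⟩ := cauchySeq_tendsto_of_complete hcau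
  -- the compact diagonal parts converge
  have htendK : Tendsto (fun n => g n - c n • (1 : X →L[ℝ] X)) atTop
      (nhds (T - clim • (1 : X →L[ℝ] X))) :=
    htend.sub (hclim.smul_const _)
  have hKn : ∀ n, IsCompactOperator ⇑(g n - c n • (1 : X →L[ℝ] X)) ∧
      IsDiagonal b (g n - c n • (1 : X →L[ℝ] X)) := fun n =>
    ⟨(b.resid (hgA n)).1, (b.resid (hgA n)).2.1⟩
  have hKc : IsCompactOperator ⇑(T - clim • (1 : X →L[ℝ] X)) :=
    isCompactOperator_of_tendsto htendK (Filter.Eventually.of_forall fun n => (hKn n).1)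
  have happly : ∀ x : X, Tendsto (fun n => (g n - c n • (1 : X →L[ℝ] X)) x) atTop
      (nhds ((T - clim • (1 : X →L[ℝ] X)) x)) := by
    intro x
    exact ((ContinuousLinearMap.apply ℝ X x).continuous.tendsto _).comp htendK
  have hKd : IsDiagonal b (T - clim • (1 : X →L[ℝ] X)) := by
    intro i j hij
    have h1 : Tendsto (fun n => b.f j ((g n - c n • (1 : X →L[ℝ] X)) (b.e i))) atTop
        (nhds (b.f j ((T - clim • (1 : X →L[ℝ] X)) (b.e i)))) :=
      ((b.f j).continuous.tendsto _).comp (happly (b.e i))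
    have h2 : (fun n => b.f j ((g n - c n • (1 : X →L[ℝ] X)) (b.e i))) = fun _ => (0:ℝ) := by
      funext n; exact (hKn n).2 i j hij
    rw [h2] at h1
    exact tendsto_nhds_unique h1 tendsto_const_nhds
  have hdecomp : T = clim • (1 : X →L[ℝ] X) + (T - clim • (1 : X →L[ℝ] X)) := by abel
  have hTA : T ∈ scalarPlusDiagCompact b := ⟨clim, _, hKc, hKd, hdecomp⟩
  refine ⟨hTA, fun κ hκ => ?_⟩
  cases κ with
  | some i =>
    have h1 : Tendsto (fun n => b.f i (g n (b.e i))) atTop (nhds (b.f i (T (b.e i)))) := by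
      refine ((b.f i).continuous.tendsto _).comp ?_
      exact ((ContinuousLinearMap.apply ℝ X (b.e i)).continuous.tendsto _).comp htend
    have h2 : (fun n => b.f i (g n (b.e i))) = fun _ => (0:ℝ) := by
      funext n; exact (hg n).2 (some i) hκ
    rw [h2] at h1
    show b.f i (T (b.e i)) = 0
    exact tendsto_nhds_unique h1 tendsto_const_nhds
  | none =>
    have h0 : c = fun _ => (0:ℝ) := by
      funext n; exact (hg n).2 none hκ
    rw [h0] at hclim
    have : clim = 0 := tendsto_nhds_unique hclim tendsto_const_nhds
    rw [b.diagEntry_none_of_decomp hKc hKd hdecomp, this]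

end Closed

end RealSchauderBasis

set_option maxHeartbeats 1000000 in
/-- **Theorem.** The closed ideals of `𝒜 = ℝI ⊕ 𝒦_diag(X)` are precisely the sets
`𝒜_L = {T ∈ 𝒜 : λ_{T,κ} = 0 for all κ ∈ L}` where `L` ranges over the subsets of
`ℕ ∪ {∞}` (encoded as `Option ℕ`, with `none` playing the role of `∞`) that are closed in
the one-point compactification, i.e. those containing `∞` whenever they are infinite. -/
theorem closed_ideals_of_scalar_plus_diag_compact
    (X : Type) [NormedAddCommGroup X] [NormedSpace ℝ X] [CompleteSpace X]
    (b : RealSchauderBasis X) (I : Set (X →L[ℝ] X)) :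
    (I ⊆ scalarPlusDiagCompact b ∧
      (0 : X →L[ℝ] X) ∈ I ∧
      (∀ S ∈ I, ∀ T ∈ I, S + T ∈ I) ∧
      (∀ (c : ℝ), ∀ S ∈ I, c • S ∈ I) ∧
      IsClosed I ∧
      (∀ T ∈ scalarPlusDiagCompact b, ∀ S ∈ I, T * S ∈ I)) ↔
    ∃ L : Set (Option ℕ),
      ({i : ℕ | some i ∈ L}.Infinite → none ∈ L) ∧
      I = {T | T ∈ scalarPlusDiagCompact b ∧ ∀ κ ∈ L, diagEntry b T κ = 0} := by
  constructor
  · rintro ⟨hsub, h0, hadd, hsmul, hclosed, hmul⟩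
    refine ⟨{κ | ∀ T ∈ I, diagEntry b T κ = 0}, ?_, ?_⟩
    · intro hinf T hT
      have hTA := hsub hT
      have htd := b.tendsto_diagEntry hTA
      have hfreq : ∃ᶠ i in Filter.atTop, diagEntry b T (some i) = (fun _ => (0:ℝ)) i := by
        rw [Nat.frequently_atTop_iff_infinite]
        refine hinf.mono ?_
        intro i hi
        exact hi T hT
      exact tendsto_nhds_unique_of_frequently_eq htd tendsto_const_nhds hfreq
    · ext T
      constructor
      · intro hT
        exact ⟨hsub hT, fun κ hκ => hκ T hT⟩
      · rintro ⟨hTA, hTL⟩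
        have hPmem : ∀ i, (¬ ∀ T' ∈ I, diagEntry b T' (some i) = 0) → b.P i ∈ I := by
          intro i hi
          push_neg at hi
          obtain ⟨T', hT'I, hT'ne⟩ := hi
          have h1 := hmul (b.P i) (b.P_memA i) T' hT'I
          rw [b.P_mul (hsub hT'I) i] at h1
          have h2 := hsmul (diagEntry b T' (some i))⁻¹ _ h1
          rwa [smul_smul, inv_mul_cancel₀ hT'ne, one_smul] at h2
        have key : ∀ R, R ∈ scalarPlusDiagCompact b → diagEntry b R none = 0 →
            (∀ i, diagEntry b R (some i) • b.P i ∈ I) → R ∈ I := by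
          intro R hRA hR0 hRP
          have hsum0 : ∀ n : ℕ,
              (∑ i ∈ Finset.range n, diagEntry b R (some i) • b.P i) ∈ I := by
            intro n
            induction n with
            | zero => simpa using h0
            | succ m ih =>
              rw [Finset.sum_range_succ]
              exact hadd _ ih _ (hRP m)
          have hsum : ∀ n, R * b.Q n ∈ I := by
            intro n
            rw [b.mul_Q hRA n]
            exact hsum0 n
          have hRc : IsCompactOperator ⇑R := by
            have := (b.resid hRA).1
            rwa [hR0, zero_smul, sub_zero] at this
          have htend : Filter.Tendsto (fun n => R * b.Q n) Filter.atTop (nhds R) :=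
            (b.tendsto_Q_mul_compact hRc).congr fun n => b.Q_mul hRA n
          exact hclosed.mem_of_tendsto htend (Filter.Eventually.of_forall hsum)
        by_cases hnone : ∀ T' ∈ I, diagEntry b T' none = 0
        · have hT0 : diagEntry b T none = 0 := hTL none hnone
          refine key T hTA hT0 fun i => ?_
          by_cases hz : diagEntry b T (some i) = 0
          · rw [hz, zero_smul]; exact h0
          · refine hsmul _ _ (hPmem i fun hall => hz (hTL (some i) hall))
        · push_neg at hnone
          obtain ⟨T', hT'I, hT'ne⟩ := hnone
          set a := diagEntry b T' none with ha
          have hT'' : (a⁻¹ • T') ∈ I := hsmul a⁻¹ _ hT'I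
          have hT''A := hsub hT''
          have hT''none : diagEntry b (a⁻¹ • T') none = 1 := by
            rw [b.diagEntry_smul a⁻¹ (hsub hT'I), ← ha, inv_mul_cancel₀ hT'ne]
          have hmulI : T * (a⁻¹ • T') ∈ I := hmul T hTA _ hT''
          have hRA : T - T * (a⁻¹ • T') ∈ scalarPlusDiagCompact b :=
            b.sub_memA hTA (b.mul_memA hTA hT''A)
          have hRd : ∀ κ, diagEntry b (T - T * (a⁻¹ • T')) κ
              = diagEntry b T κ * (1 - diagEntry b (a⁻¹ • T') κ) := by
            intro κ
            rw [b.diagEntry_sub hTA (b.mul_memA hTA hT''A), b.diagEntry_mul hTA hT''A]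
            ring
          have hR0 : diagEntry b (T - T * (a⁻¹ • T')) none = 0 := by
            rw [hRd none, hT''none]; ring
          have hRI : T - T * (a⁻¹ • T') ∈ I := by
            refine key _ hRA hR0 fun i => ?_
            by_cases hz : diagEntry b (T - T * (a⁻¹ • T')) (some i) = 0
            · rw [hz, zero_smul]; exact h0
            · refine hsmul _ _ (hPmem i fun hall => ?_)
              apply hz
              rw [hRd (some i), hTL (some i) hall, zero_mul]
          have hfin := hadd _ hmulI _ hRI
          have heq : T * (a⁻¹ • T') + (T - T * (a⁻¹ • T')) = T := by abel
          rwa [heq] at hfin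
  · rintro ⟨L, hL, rfl⟩
    refine ⟨fun T hT => hT.1, ⟨b.zero_memA, fun κ _ => b.diagEntry_zero κ⟩, ?_, ?_,
      b.isClosed_AL L, ?_⟩
    · rintro S ⟨hSA, hS⟩ T ⟨hTA, hT⟩
      exact ⟨b.add_memA hSA hTA, fun κ hκ => by
        rw [b.diagEntry_add hSA hTA, hS κ hκ, hT κ hκ, add_zero]⟩
    · rintro c S ⟨hSA, hS⟩
      exact ⟨b.smul_memA c hSA, fun κ hκ => by
        rw [b.diagEntry_smul c hSA, hS κ hκ, mul_zero]⟩
    · rintro T hTA S ⟨hSA, hS⟩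
      exact ⟨b.mul_memA hTA hSA, fun κ hκ => by
        rw [b.diagEntry_mul hTA hSA, hS κ hκ, mul_zero]⟩
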